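/- Let 1 ≤ d ≤ r ≤ n. If 𝐈 ∈ Intersecting(r,n,s) and 𝐉 ∈ Intersecting(d,r,s), then the composition 𝐈𝐉 belongs to Intersecting(d,n,s). -/

import Mathlib

open Module

noncomputable section

/-- A complete flag on `ℂ^m`: an increasing family of subspaces with
`dim (F i) = i + 1` (`0`-based indexing, so `F i` is the `i+1`-st step). -/
structure Flagg (m : ℕ) where
  F : Fin m → Submodule ℂ (Fin m → ℂ)
  mono : Monotone F
  rank_eq : ∀ i : Fin m, finrank ℂ (F i) = (i : ℕ) + 1

/-- An `s`-tuple `J` of (strictly increasing) maps `[d] → [r]` is *intersecting* if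
for every `s`-tuple of complete flags on `ℂ^r` the corresponding intersection of
Schubert varieties in the Grassmannian `Gr(d, ℂ^r)` is nonempty. -/
def Intersecting {s d r : ℕ} (J : Fin s → Fin d → Fin r) : Prop :=
  ∀ F : Fin s → Flagg r, ∃ V : Submodule ℂ (Fin r → ℂ), finrank ℂ V = d ∧
    ∀ (l : Fin s) (k : Fin d), (k : ℕ) + 1 ≤ finrank ℂ ↥(V ⊓ (F l).F (J l k))

/-- `dim I = ∑_j (I(j) - j)`. -/
def dimI {d r : ℕ} (J : Fin d → Fin r) : ℤ := ∑ k, ((J k : ℤ) - (k : ℤ))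

/-- Expected dimension of a tuple `J ∈ Subsets(d,r,s)`. -/
def edim {s d r : ℕ} (J : Fin s → Fin d → Fin r) : ℤ :=
  (d : ℤ) * ((r : ℤ) - (d : ℤ)) - ∑ l, ((d : ℤ) * ((r : ℤ) - (d : ℤ)) - dimI (J l))

/-- `dim` for raw `ℕ`-valued increasing sequences. -/
def dimN {d : ℕ} (f : Fin d → ℕ) : ℤ := ∑ k, ((f k : ℤ) - (k : ℤ))

/-- Expected dimension for raw `ℕ`-valued tuples, with ambient dimension `n` explicit. -/
def edimN {s d : ℕ} (n : ℕ) (f : Fin s → Fin d → ℕ) : ℤ :=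
  (d : ℤ) * ((n : ℤ) - (d : ℤ)) - ∑ l, ((d : ℤ) * ((n : ℤ) - (d : ℤ)) - dimN (f l))

/-- `T(Λ) = ∑_l ∑_j Λ_l(j)`. -/
def TT {s r : ℕ} (Λ : Fin s → Fin r → ℝ) : ℝ := ∑ l, ∑ j, Λ l j

/-- `T_J(Λ) = ∑_l ∑_{j ∈ J_l} Λ_l(j)`. -/
def TJ {s d r : ℕ} (J : Fin s → Fin d → Fin r) (Λ : Fin s → Fin r → ℝ) : ℝ :=
  ∑ l, ∑ k, Λ l (J l k)

/-- `Γ(J)_l(k) = k - J_l(k) + (r - d)`, a weakly decreasing real `d`-tuple. -/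
def GammaT {s d r : ℕ} (J : Fin s → Fin d → Fin r) : Fin s → Fin d → ℝ :=
  fun l k => (k : ℝ) - (J l k : ℝ) + ((r : ℝ) - (d : ℝ))

/-- Membership of `(Λ, t)` in the Kirwan cone `𝒦(r,s)`: each `Λ_l` is weakly
decreasing and there are Hermitian matrices `A_1, …, A_s` summing to `t·I_r`
whose decreasingly-ordered spectra are the `Λ_l`. -/
def KirwanMem {s r : ℕ} (Λ : Fin s → Fin r → ℝ) (t : ℝ) : Prop :=
  (∀ l, Antitone (Λ l)) ∧
  ∃ (A : Fin s → Matrix (Fin r) (Fin r) ℂ) (hA : ∀ l, (A l).IsHermitian),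
    (∑ l, A l) = (t : ℂ) • (1 : Matrix (Fin r) (Fin r) ℂ) ∧
    ∀ l, ∃ e : Equiv.Perm (Fin r), ∀ i, Λ l i = (hA l).eigenvalues (e i)

/-- The subspace of a flag with `k` elements (so `flagAt G 0 = ⊥`). -/
def flagAt {m : ℕ} (G : Flagg m) : ℕ → Submodule ℂ (Fin m → ℂ)
  | 0 => ⊥
  | (k + 1) => if h : k < m then G.F ⟨k, h⟩ else ⊤

/-- The space `ℒ_I(F,G)` of linear maps `φ : ℂ^r → ℂ^q` with
`φ(F_l(j)) ⊆ G_l(I_l(j) - j)` for all `l, j`. -/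
def LSpace {s r q : ℕ} (I : Fin s → Fin r → ℕ) (F : Fin s → Flagg r) (G : Fin s → Flagg q) :
    Submodule ℂ ((Fin r → ℂ) →ₗ[ℂ] (Fin q → ℂ)) where
  carrier := {φ | ∀ (l : Fin s) (j : Fin r), ∀ v ∈ (F l).F j,
    φ v ∈ flagAt (G l) (I l j - (j : ℕ))}
  add_mem' := by
    intro a b ha hb l j v hv
    simpa using add_mem (ha l j v hv) (hb l j v hv)
  zero_mem' := by
    intro l j v hv
    simp
  smul_mem' := by
    intro c a ha l j v hv
    simpa using Submodule.smul_mem _ c (ha l j v hv)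

/-- The true dimension `tdim I`, for a raw tuple `I ∈ Subsets(r, r + q, s)`
(here `q = n - r`). -/
def tdim {s : ℕ} (r q : ℕ) (I : Fin s → Fin r → ℕ) : ℕ :=
  sInf {m : ℕ | ∃ (F : Fin s → Flagg r) (G : Fin s → Flagg q), finrank ℂ (LSpace I F G) = m}

/-- The kernel dimension `kdim I`. -/
def kdim {s : ℕ} (r q : ℕ) (I : Fin s → Fin r → ℕ) : ℕ :=
  sInf {m : ℕ | ∃ (F : Fin s → Flagg r) (G : Fin s → Flagg q)
      (φ : (Fin r → ℂ) →ₗ[ℂ] (Fin q → ℂ)), φ ∈ LSpace I F G ∧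
      finrank ℂ (LSpace I F G) = tdim r q I ∧ finrank ℂ (LinearMap.ker φ) = m}

/-- The (`0`-based) Schubert position of a subspace `W` w.r.t. a flag:
`posN Fl W k` is the least `j` with `dim (Fl(j) ⊓ W) = k + 1`. -/
def posN {m : ℕ} (Fl : Flagg m) (W : Submodule ℂ (Fin m → ℂ)) (k : ℕ) : ℕ :=
  sInf {j : ℕ | ∃ h : j < m, finrank ℂ ↥(Fl.F ⟨j, h⟩ ⊓ W) = k + 1}

/-- The (`0`-based, `ℕ`-valued) kernel position `kPos(I)_l(k)`. -/
def kPosFun {s : ℕ} (r q : ℕ) (I : Fin s → Fin r → ℕ) (l : Fin s) (k : ℕ) : ℕ :=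
  sInf {p : ℕ | ∃ (F : Fin s → Flagg r) (G : Fin s → Flagg q)
      (φ : (Fin r → ℂ) →ₗ[ℂ] (Fin q → ℂ)), φ ∈ LSpace I F G ∧
      finrank ℂ (LSpace I F G) = tdim r q I ∧
      finrank ℂ (LinearMap.ker φ) = kdim r q I ∧ posN (F l) (LinearMap.ker φ) k = p}

/-- Apply an `r`-tuple of reals at a natural index (junk value `0` out of range). -/
def applyI {r : ℕ} (f : Fin r → ℝ) (j : ℕ) : ℝ := if h : j < r then f ⟨j, h⟩ else 0

/-- Apply an `r`-tuple of naturals at a natural index (junk value `0` out of range). -/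
def applyN {r : ℕ} (f : Fin r → ℕ) (j : ℕ) : ℕ := if h : j < r then f ⟨j, h⟩ else 0

/-- The slope `slope_θ(J) = (1/d) ∑_l ∑_{j ∈ J_l} θ_l(j)` of a tuple. -/
def slopeT {s d r : ℕ} (θ : Fin s → Fin r → ℝ) (J : Fin s → Fin d → Fin r) : ℝ :=
  ((d : ℝ))⁻¹ * ∑ l, ∑ k, θ l (J l k)

/-- The slope `slope_θ(W, F) = slope_θ(Pos(W, F))` of a (nonzero) subspace. -/
def slopeW {s r : ℕ} (θ : Fin s → Fin r → ℝ) (F : Fin s → Flagg r)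
    (W : Submodule ℂ (Fin r → ℂ)) : ℝ :=
  ((finrank ℂ W : ℝ))⁻¹ * ∑ l, ∑ k ∈ Finset.range (finrank ℂ W), applyI (θ l) (posN (F l) W k)

end

section IntersectingCompAux

lemma step_sub {N : Type*} [AddCommGroup N] [Module ℂ N] [FiniteDimensional ℂ N]
    (P Q : Submodule ℂ N) (hPQ : P ≤ Q) (hlt : finrank ℂ P < finrank ℂ Q) :
    ∃ T : Submodule ℂ N, P ≤ T ∧ T ≤ Q ∧ finrank ℂ T = finrank ℂ P + 1 := by
  have hlt' : P < Q := Submodule.lt_of_le_of_finrank_lt_finrank hPQ hlt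
  obtain ⟨v, hvQ, hvP⟩ := SetLike.exists_of_lt hlt'
  have hv0 : v ≠ 0 := fun h => hvP (h ▸ P.zero_mem)
  refine ⟨P ⊔ Submodule.span ℂ {v}, le_sup_left, sup_le hPQ ?_, ?_⟩
  · rw [Submodule.span_le, Set.singleton_subset_iff]; exact hvQ
  · have hinf : P ⊓ Submodule.span ℂ {v} = ⊥ := by
      rw [eq_bot_iff]
      rintro x ⟨hxP, hxv⟩
      obtain ⟨c, rfl⟩ := Submodule.mem_span_singleton.mp hxv
      rcases eq_or_ne c 0 with rfl | hc
      · simp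
      · exfalso; exact hvP (by simpa [smul_smul, inv_mul_cancel₀ hc] using P.smul_mem c⁻¹ hxP)
    have := Submodule.finrank_sup_add_finrank_inf_eq P (Submodule.span ℂ {v})
    rw [hinf, finrank_span_singleton hv0] at this
    simpa using this

lemma exists_chain {N : Type*} [AddCommGroup N] [Module ℂ N] [FiniteDimensional ℂ N] :
    ∀ (m : ℕ) (D : Fin m → Submodule ℂ N), Monotone D →
    (∀ j : Fin m, (j : ℕ) + 1 ≤ finrank ℂ (D j)) →
    ∃ G : Fin m → Submodule ℂ N, Monotone G ∧
      ∀ j, G j ≤ D j ∧ finrank ℂ (G j) = (j : ℕ) + 1 := by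
  intro m
  induction m with
  | zero => exact fun D _ _ => ⟨fun j => ⊥, fun a b _ => le_rfl, fun j => j.elim0⟩
  | succ m ih =>
    intro D hD hdim
    obtain ⟨G, hGmono, hG⟩ := ih (fun j => D j.castSucc)
      (fun a b hab => hD (by simpa using hab)) (fun j => by simpa using hdim j.castSucc)
    -- previous subspace P
    have : ∃ P : Submodule ℂ N, P ≤ D (Fin.last m) ∧ finrank ℂ P = m ∧
        ∀ j : Fin m, G j ≤ P := by
      rcases Nat.eq_zero_or_pos m with rfl | hm
      · exact ⟨⊥, bot_le, by simp, fun j => j.elim0⟩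
      · refine ⟨G ⟨m - 1, by omega⟩, le_trans (hG _).1 (hD (by rw [Fin.le_def]; simp)), ?_, ?_⟩
        · have := (hG ⟨m - 1, by omega⟩).2
          simpa [Nat.sub_add_cancel hm] using this
        · intro j
          refine hGmono ?_
          rw [Fin.le_def]
          show (j : ℕ) ≤ m - 1
          have := j.isLt
          omega
    obtain ⟨P, hPD, hPrank, hGP⟩ := this
    obtain ⟨T, hPT, hTD, hTrank⟩ := step_sub P (D (Fin.last m)) hPD
      (by rw [hPrank]; exact lt_of_lt_of_le (Nat.lt_succ_self m) (by simpa using hdim (Fin.last m)))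
    refine ⟨fun j => if h : (j : ℕ) < m then G ⟨j, h⟩ else T, ?_, ?_⟩
    · intro a b hab
      by_cases hb : (b : ℕ) < m
      · have ha : (a : ℕ) < m := lt_of_le_of_lt hab hb
        simpa [ha, hb] using hGmono (show (⟨(a:ℕ), ha⟩ : Fin m) ≤ ⟨b, hb⟩ from hab)
      · by_cases ha : (a : ℕ) < m
        · simpa [ha, hb] using le_trans (hGP ⟨a, ha⟩) hPT
        · simp [ha, hb]
    · intro j
      dsimp only
      by_cases h : (j : ℕ) < m
      · constructor
        · rw [dif_pos h]
          exact le_trans (hG ⟨j, h⟩).1 (hD (by rw [Fin.le_def]; simp))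
        · refine (congrArg (fun U : Submodule ℂ N => finrank ℂ U) (dif_pos h)).trans ?_
          exact (hG ⟨j, h⟩).2
      · constructor
        · rw [dif_neg h]
          refine le_trans hTD (le_of_eq ?_)
          congr 1
          ext
          simp only [Fin.val_last]
          omega
        · refine (congrArg (fun U : Submodule ℂ N => finrank ℂ U) (dif_neg h)).trans ?_
          rw [hTrank, hPrank]
          have := j.isLt
          omega

end IntersectingCompAux

/-- If `𝐈 ∈ Intersecting(r,n,s)` and `𝐉 ∈ Intersecting(d,r,s)` then
`𝐈𝐉 ∈ Intersecting(d,n,s)`. -/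
theorem intersecting_comp (s d r n : ℕ) (hs : 2 ≤ s) (hd : 1 ≤ d)
    (hdr : d ≤ r) (hrn : r ≤ n)
    (I : Fin s → Fin r → Fin n) (hI : ∀ l, StrictMono (I l)) (hIint : Intersecting I)
    (J : Fin s → Fin d → Fin r) (hJ : ∀ l, StrictMono (J l)) (hJint : Intersecting J) :
    Intersecting (fun l k => I l (J l k)) := by
  intro FF
  obtain ⟨V, hVrank, hVmeet⟩ := hIint FF
  have hfr : finrank ℂ (Fin r → ℂ) = finrank ℂ V := by
    simp [hVrank]
  obtain ⟨e⟩ := FiniteDimensional.nonempty_linearEquiv_of_finrank_eq hfr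
  set ι : (Fin r → ℂ) →ₗ[ℂ] (Fin n → ℂ) := V.subtype.comp e.toLinearMap with hι
  have hinj : Function.Injective ι := V.injective_subtype.comp e.injective
  have hrange : LinearMap.range ι = V := by
    rw [hι, LinearMap.range_comp, LinearEquiv.range, Submodule.map_top,
      Submodule.range_subtype]
  have key : ∀ p : Submodule ℂ (Fin n → ℂ), p ≤ V →
      finrank ℂ (Submodule.comap ι p) = finrank ℂ p := by
    intro p hp
    have h1 : Submodule.map ι (Submodule.comap ι p) = p := by
      rw [Submodule.map_comap_eq, hrange, inf_eq_right.mpr hp]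
    calc finrank ℂ (Submodule.comap ι p)
        = finrank ℂ (Submodule.map ι (Submodule.comap ι p)) :=
          (LinearEquiv.finrank_eq (Submodule.equivMapOfInjective ι hinj _))
      _ = finrank ℂ p := by rw [h1]
  set D : Fin s → Fin r → Submodule ℂ (Fin r → ℂ) :=
    fun l j => Submodule.comap ι (V ⊓ (FF l).F (I l j)) with hD
  have hDmono : ∀ l, Monotone (D l) := by
    intro l a b hab
    exact Submodule.comap_mono (inf_le_inf_left V ((FF l).mono ((hI l).monotone hab)))
  have hDdim : ∀ l (j : Fin r), (j : ℕ) + 1 ≤ finrank ℂ (D l j) := by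
    intro l j
    rw [hD, key _ inf_le_left]
    exact hVmeet l j
  have hGex : ∀ l, ∃ G : Fin r → Submodule ℂ (Fin r → ℂ), Monotone G ∧
      ∀ j, G j ≤ D l j ∧ finrank ℂ (G j) = (j : ℕ) + 1 :=
    fun l => exists_chain r (D l) (hDmono l) (hDdim l)
  choose Gc hGmono hGp using hGex
  set Gl : Fin s → Flagg r := fun l => ⟨Gc l, hGmono l, fun j => (hGp l j).2⟩ with hGl
  obtain ⟨W, hWrank, hWmeet⟩ := hJint Gl
  refine ⟨Submodule.map ι W, ?_, ?_⟩
  · rw [← LinearEquiv.finrank_eq (Submodule.equivMapOfInjective ι hinj W)]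
    exact hWrank
  · intro l k
    have h1 : Submodule.map ι (W ⊓ Gc l (J l k)) ≤
        Submodule.map ι W ⊓ (FF l).F (I l (J l k)) := by
      refine le_inf (Submodule.map_mono inf_le_left) ?_
      refine le_trans (Submodule.map_mono (le_trans inf_le_right (hGp l (J l k)).1)) ?_
      exact le_trans (Submodule.map_comap_le ι _) inf_le_right
    have h2 : (k : ℕ) + 1 ≤ finrank ℂ (Submodule.map ι (W ⊓ Gc l (J l k))) := by
      rw [← LinearEquiv.finrank_eq (Submodule.equivMapOfInjective ι hinj _)]
      exact hWmeet l k
    exact le_trans h2 (Submodule.finrank_mono h1)
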